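/- Let O be an order in a number field K with conductor f, and let a, b be ideals of O_K such that a + f = O_K and b divides f. Then (a ∩ O) + (b ∩ O) = O. -/
import Mathlib

open NumberField

/-- If `a + f = 𝓞 K` and `b` divides the conductor `f`, then `(a ∩ O) + (b ∩ O) = O`. -/
theorem contraction_coprime_of_coprime_conductor_dvd {K : Type*} [Field K] [NumberField K]
    (O : Subring (𝓞 K)) (hO : O.toAddSubgroup.index ≠ 0)
    (f : Ideal (𝓞 K)) (hf : ∀ a : 𝓞 K, a ∈ f ↔ ∀ x : 𝓞 K, a * x ∈ O)
    (a b : Ideal (𝓞 K)) (ha : a ⊔ f = ⊤) (hb : f ≤ b) :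
    a.comap O.subtype ⊔ b.comap O.subtype = ⊤ := by
  rw [Ideal.eq_top_iff_one] at ha ⊢
  rw [Submodule.mem_sup] at ha
  obtain ⟨x, hx, y, hy, hxy⟩ := ha
  have hyO : y ∈ O := by simpa using (hf y).mp hy 1
  have hxO : x ∈ O := by
    have hx1 : x = 1 - y := by rw [← hxy]; ring
    rw [hx1]; exact O.sub_mem O.one_mem hyO
  refine Submodule.mem_sup.mpr ⟨⟨x, hxO⟩, ?_, ⟨y, hyO⟩, ?_, ?_⟩
  · exact Ideal.mem_comap.mpr hx
  · exact Ideal.mem_comap.mpr (hb hy)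
  · exact Subtype.ext hxy
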